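/- Let ι_X : A → X and f : Y → X be maps and let F = Y ×_X A be the homotopy pullback. Then secat(Y, F) ≤ n if and only if f factors up to homotopy through the n-th Ganea map g_n : G_n(ι_X) → X. -/

import Mathlib

open unitInterval

universe u

noncomputable section

/-- A continuous map is a homotopy equivalence. -/
def IsHEquiv {X Y : Type u} [TopologicalSpace X] [TopologicalSpace Y] (f : C(X, Y)) : Prop :=
  ∃ g : C(Y, X), (f.comp g).Homotopic (ContinuousMap.id Y) ∧
    (g.comp f).Homotopic (ContinuousMap.id X)

section HPO

variable {Z A B P : Type u} [TopologicalSpace Z] [TopologicalSpace A] [TopologicalSpace B]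
  [TopologicalSpace P]

/-- Gluing relation of the double mapping cylinder. -/
inductive HPORel (f : C(Z, A)) (g : C(Z, B)) :
    (A ⊕ ((Z × I) ⊕ B)) → (A ⊕ ((Z × I) ⊕ B)) → Prop
  | left (z : Z) : HPORel f g (Sum.inl (f z)) (Sum.inr (Sum.inl (z, 0)))
  | right (z : Z) : HPORel f g (Sum.inr (Sum.inl (z, 1))) (Sum.inr (Sum.inr (g z)))

/-- The double mapping cylinder (standard homotopy pushout) of `f : Z → A` and `g : Z → B`. -/
def HPO (f : C(Z, A)) (g : C(Z, B)) : Type u := Quot (HPORel f g)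

instance (f : C(Z, A)) (g : C(Z, B)) : TopologicalSpace (HPO f g) :=
  inferInstanceAs (TopologicalSpace (Quot _))

/-- Left structural map of the homotopy pushout. -/
def HPO.inl (f : C(Z, A)) (g : C(Z, B)) : C(A, HPO f g) :=
  ⟨fun a => Quot.mk _ (Sum.inl a), continuous_quot_mk.comp continuous_inl⟩

/-- Right structural map of the homotopy pushout. -/
def HPO.inr (f : C(Z, A)) (g : C(Z, B)) : C(B, HPO f g) :=
  ⟨fun b => Quot.mk _ (Sum.inr (Sum.inr b)),
    continuous_quot_mk.comp (continuous_inr.comp continuous_inr)⟩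

/-- Cylinder part of the homotopy pushout. -/
def HPO.cyl (f : C(Z, A)) (g : C(Z, B)) : C(Z × I, HPO f g) :=
  ⟨fun zt => Quot.mk _ (Sum.inr (Sum.inl zt)),
    continuous_quot_mk.comp (continuous_inr.comp continuous_inl)⟩

/-- The whisker map induced on the double mapping cylinder by a homotopy commutative square. -/
def HPO.desc (f : C(Z, A)) (g : C(Z, B)) (h : C(A, P)) (k : C(B, P))
    (H : ContinuousMap.Homotopy (h.comp f) (k.comp g)) : C(HPO f g, P) :=
  ⟨Quot.lift (Sum.elim h (Sum.elim (fun zt => H (zt.2, zt.1)) k))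
    (by
      rintro x y (⟨z⟩ | ⟨z⟩)
      · simp only [Sum.elim_inl, Sum.elim_inr]; exact (H.apply_zero z).symm
      · simp only [Sum.elim_inl, Sum.elim_inr]; exact H.apply_one z),
    continuous_quot_lift _ (by
      apply Continuous.sumElim h.continuous
      apply Continuous.sumElim _ k.continuous
      exact H.continuous.comp continuous_swap)⟩

/-- The square with legs `f, g` and cone maps `h, k` is a homotopy pushout. -/
def IsHPO (f : C(Z, A)) (g : C(Z, B)) (h : C(A, P)) (k : C(B, P)) : Prop :=
  ∃ H : ContinuousMap.Homotopy (h.comp f) (k.comp g), IsHEquiv (HPO.desc f g h k H)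

end HPO

section HPB

variable {A B X P : Type u} [TopologicalSpace A] [TopologicalSpace B] [TopologicalSpace X]
  [TopologicalSpace P]

/-- The standard homotopy pullback of `f : A → X` and `g : B → X`. -/
def HPB (f : C(A, X)) (g : C(B, X)) : Type u :=
  { p : A × C(I, X) × B // p.2.1 0 = f p.1 ∧ p.2.1 1 = g p.2.2 }

instance (f : C(A, X)) (g : C(B, X)) : TopologicalSpace (HPB f g) :=
  inferInstanceAs (TopologicalSpace (Subtype _))

/-- First projection of the homotopy pullback. -/
def HPB.fst (f : C(A, X)) (g : C(B, X)) : C(HPB f g, A) :=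
  ⟨fun p => p.1.1, continuous_fst.comp continuous_subtype_val⟩

/-- Second projection of the homotopy pullback. -/
def HPB.snd (f : C(A, X)) (g : C(B, X)) : C(HPB f g, B) :=
  ⟨fun p => p.1.2.2, continuous_snd.comp (continuous_snd.comp continuous_subtype_val)⟩

/-- The tautological homotopy over the homotopy pullback. -/
def HPB.pathHomotopy (f : C(A, X)) (g : C(B, X)) :
    ContinuousMap.Homotopy (g.comp (HPB.snd f g)) (f.comp (HPB.fst f g)) where
  toFun := fun q => q.2.1.2.1 (σ q.1)
  continuous_toFun := by
    have h1 : Continuous fun q : I × HPB f g => (q.2.1.2.1, σ q.1) := by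
      refine Continuous.prodMk ?_ (continuous_symm.comp continuous_fst)
      exact (continuous_fst.comp (continuous_snd.comp continuous_subtype_val)).comp continuous_snd
    exact ContinuousEval.continuous_eval.comp h1
  map_zero_left := fun p => by simp [HPB.snd, p.2.2]
  map_one_left := fun p => by simp [HPB.fst, p.2.1]

/-- The comparison (whisker) map into the homotopy pullback. -/
def HPB.lift (f : C(A, X)) (g : C(B, X)) (p : C(P, A)) (q : C(P, B))
    (H : ContinuousMap.Homotopy (f.comp p) (g.comp q)) : C(P, HPB f g) :=
  ⟨fun y => ⟨(p y, ((H.toContinuousMap.comp ⟨Prod.swap, continuous_swap⟩).curry y, q y)),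
      by simp⟩,
    by
      apply Continuous.subtype_mk
      exact p.continuous.prodMk
        (((H.toContinuousMap.comp ⟨Prod.swap, continuous_swap⟩).curry).continuous.prodMk
          q.continuous)⟩

/-- The square with cospan `f, g` and cone maps `p, q` is a homotopy pullback. -/
def IsHPB (f : C(A, X)) (g : C(B, X)) (p : C(P, A)) (q : C(P, B)) : Prop :=
  ∃ H : ContinuousMap.Homotopy (f.comp p) (g.comp q), IsHEquiv (HPB.lift f g p q H)

end HPB

/-- One step of the Ganea construction: a space over `X` under `A`. -/
structure GaneaStep (A X : Type u) [TopologicalSpace A] [TopologicalSpace X] where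
  G : Type u
  inst : TopologicalSpace G
  g : @ContinuousMap G X inst _
  α : @ContinuousMap A G _ inst

attribute [instance] GaneaStep.inst

/-- The Ganea construction of a map `ι : A → X`. -/
def ganea {A X : Type u} [TopologicalSpace A] [TopologicalSpace X] (ι : C(A, X)) :
    ℕ → GaneaStep A X
  | 0 => { G := A, inst := inferInstance, g := ι, α := ContinuousMap.id A }
  | n + 1 =>
    let s := ganea ι n
    { G := HPO (HPB.snd s.g ι) (HPB.fst s.g ι)
      inst := inferInstance
      g := HPO.desc (HPB.snd s.g ι) (HPB.fst s.g ι) ι s.g (HPB.pathHomotopy s.g ι)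
      α := HPO.inl (HPB.snd s.g ι) (HPB.fst s.g ι) }

/-- Least natural number (as `ℕ∞`) satisfying a predicate. -/
def theNat (P : ℕ → Prop) : ℕ∞ := sInf ((Nat.cast : ℕ → ℕ∞) '' { n | P n })

/-- `secat ι ≤ n` : the `n`-th Ganea map admits a homotopy section. -/
def secatLe {A X : Type u} [TopologicalSpace A] [TopologicalSpace X] (ι : C(A, X)) (n : ℕ) :
    Prop :=
  ∃ s : C(X, (ganea ι n).G), ((ganea ι n).g.comp s).Homotopic (ContinuousMap.id X)

/-- `relcat ι ≤ n` : the `n`-th Ganea map admits a homotopy section compatible with `α_n`. -/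
def relcatLe {A X : Type u} [TopologicalSpace A] [TopologicalSpace X] (ι : C(A, X)) (n : ℕ) :
    Prop :=
  ∃ s : C(X, (ganea ι n).G), ((ganea ι n).g.comp s).Homotopic (ContinuousMap.id X) ∧
    (s.comp ι).Homotopic (ganea ι n).α

/-- Sectional category (James), Ganea style. -/
def secat {A X : Type u} [TopologicalSpace A] [TopologicalSpace X] (ι : C(A, X)) : ℕ∞ :=
  theNat (secatLe ι)

/-- Relative category of a map. -/
def relcat {A X : Type u} [TopologicalSpace A] [TopologicalSpace X] (ι : C(A, X)) : ℕ∞ :=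
  theNat (relcatLe ι)

/-- `PushcatLe A X tX ι n` : `ι` is obtained from a homotopy equivalence by at most `n`
successive homotopy pushouts along maps to `A`. -/
inductive PushcatLe (A : Type u) [tA : TopologicalSpace A] :
    ∀ (X : Type u) (tX : TopologicalSpace X), @ContinuousMap A X tA tX → ℕ → Prop
  | equiv {X : Type u} [tX : TopologicalSpace X] (ι : C(A, X)) :
      IsHEquiv ι → PushcatLe A X tX ι 0
  | step {X X' Z : Type u} [tX : TopologicalSpace X] [tX' : TopologicalSpace X']
      [tZ : TopologicalSpace Z] {ι : C(A, X)} {n : ℕ} (h : PushcatLe A X tX ι n)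
      (ρ : C(Z, A)) (τ : C(Z, X)) (ι' : C(A, X')) (χ : C(X, X'))
      (hpo : IsHPO ρ τ ι' χ) (hχ : (χ.comp ι).Homotopic ι') :
      PushcatLe A X' tX' ι' (n + 1)
  | homotopic {X : Type u} [tX : TopologicalSpace X] {ι ι' : C(A, X)} {n : ℕ}
      (h : PushcatLe A X tX ι n) (hh : ι.Homotopic ι') : PushcatLe A X tX ι' n

/-- `RelcatLe` : as `PushcatLe`, with a compatible section at each step. -/
inductive RelcatLe (A : Type u) [tA : TopologicalSpace A] :
    ∀ (X : Type u) (tX : TopologicalSpace X), @ContinuousMap A X tA tX → ℕ → Prop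
  | equiv {X : Type u} [tX : TopologicalSpace X] (ι : C(A, X)) :
      IsHEquiv ι → RelcatLe A X tX ι 0
  | step {X X' Z : Type u} [tX : TopologicalSpace X] [tX' : TopologicalSpace X']
      [tZ : TopologicalSpace Z] {ι : C(A, X)} {n : ℕ} (h : RelcatLe A X tX ι n)
      (ρ : C(Z, A)) (τ : C(Z, X)) (ι' : C(A, X')) (χ : C(X, X'))
      (hpo : IsHPO ρ τ ι' χ) (hχ : (χ.comp ι).Homotopic ι')
      (σ₀ : C(A, Z)) (hσ : (ρ.comp σ₀).Homotopic (ContinuousMap.id A))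
      (hτσ : (τ.comp σ₀).Homotopic ι) :
      RelcatLe A X' tX' ι' (n + 1)
  | homotopic {X : Type u} [tX : TopologicalSpace X] {ι ι' : C(A, X)} {n : ℕ}
      (h : RelcatLe A X tX ι n) (hh : ι.Homotopic ι') : RelcatLe A X tX ι' n

/-- Strong pushout category of a map. -/
def Pushcat {A X : Type u} [tA : TopologicalSpace A] [tX : TopologicalSpace X]
    (ι : C(A, X)) : ℕ∞ :=
  theNat (fun n => PushcatLe A X tX ι n)

/-- Strong relative category of a map. -/
def Relcat {A X : Type u} [tA : TopologicalSpace A] [tX : TopologicalSpace X]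
    (ι : C(A, X)) : ℕ∞ :=
  theNat (fun n => RelcatLe A X tX ι n)

/-- Lusternik–Schnirelmann category (Ganea-normalized) of a pointed space. -/
def catP (X : Type u) [TopologicalSpace X] (x₀ : X) : ℕ∞ :=
  secat (ContinuousMap.const PUnit.{u + 1} x₀)

/-- Strong (Fox) category of a pointed space. -/
def CatP (X : Type u) [TopologicalSpace X] (x₀ : X) : ℕ∞ :=
  Relcat (ContinuousMap.const PUnit.{u + 1} x₀)

/-- `g : A → X` is the homotopy cofibre of `f : Y → A` (with cone point `x₀`). -/
def IsHCofiberPt {Y A X : Type u} [TopologicalSpace Y] [TopologicalSpace A] [TopologicalSpace X]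
    (f : C(Y, A)) (g : C(A, X)) (x₀ : X) : Prop :=
  IsHPO f (ContinuousMap.const Y (PUnit.unit : PUnit.{u + 1})) g
    (ContinuousMap.const PUnit.{u + 1} x₀)

/-- The diagonal map. -/
def diagMap (X : Type u) [TopologicalSpace X] : C(X, X × X) :=
  ⟨fun x => (x, x), continuous_id.prodMk continuous_id⟩

/-- Topological complexity (Farber, normalized). -/
def compl (X : Type u) [TopologicalSpace X] : ℕ∞ := secat (diagMap X)

/-- Strong complexity: strong relative category of the diagonal. -/
def Compl' (X : Type u) [TopologicalSpace X] : ℕ∞ := Relcat (diagMap X)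

end

noncomputable section SchwarzAux

open Relation

/-! ### Generic topology helpers -/

theorem continuous_of_openCover {W T : Type*} [TopologicalSpace W] [TopologicalSpace T]
    {f : W → T} {ι : Sort*} (U : ι → Set W)
    (hU : ∀ i, IsOpen (U i)) (hcov : ∀ x, ∃ i, x ∈ U i)
    (hf : ∀ i, ContinuousOn f (U i)) : Continuous f := by
  rw [continuous_iff_continuousAt]
  intro x
  obtain ⟨i, hx⟩ := hcov x
  exact (hf i).continuousAt ((hU i).mem_nhds hx)

/-! ### Concatenation of families of paths -/

section Concat

variable {W T : Type*} [TopologicalSpace W] [TopologicalSpace T]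

/-- Concatenation of two families of paths. -/
noncomputable def concatH (a b : C(W × I, T)) (hab : ∀ w, a (w, 1) = b (w, 0)) :
    C(W × I, T) where
  toFun := fun p =>
    if ((p.2 : ℝ)) ≤ 1 / 2 then
      a (p.1, ⟨min (2 * (p.2 : ℝ)) 1, le_min (by nlinarith [p.2.2.1]) zero_le_one,
        min_le_right _ _⟩)
    else
      b (p.1, ⟨max (2 * (p.2 : ℝ) - 1) 0, le_max_right _ _,
        max_le (by nlinarith [p.2.2.2]) zero_le_one⟩)
  continuous_toFun := by
    apply Continuous.if_le
    · exact a.continuous.comp (continuous_fst.prodMk (Continuous.subtype_mk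
        ((continuous_const.mul (continuous_subtype_val.comp continuous_snd)).min
          continuous_const) _))
    · exact b.continuous.comp (continuous_fst.prodMk (Continuous.subtype_mk
        (((continuous_const.mul (continuous_subtype_val.comp continuous_snd)).sub
          continuous_const).max continuous_const) _))
    · exact continuous_subtype_val.comp continuous_snd
    · exact continuous_const
    · intro p hp
      have h1 : (⟨min (2 * (p.2 : ℝ)) 1, le_min (by nlinarith [p.2.2.1]) zero_le_one,
          min_le_right _ _⟩ : I) = (1 : I) := by
        apply Subtype.ext
        show min (2 * (p.2 : ℝ)) 1 = 1
        rw [hp]; norm_num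
      have h2 : (⟨max (2 * (p.2 : ℝ) - 1) 0, le_max_right _ _,
          max_le (by nlinarith [p.2.2.2]) zero_le_one⟩ : I) = (0 : I) := by
        apply Subtype.ext
        show max (2 * (p.2 : ℝ) - 1) 0 = 0
        rw [hp]; norm_num
      rw [h1, h2]
      exact hab p.1

theorem concatH_of_le (a b : C(W × I, T)) (hab : ∀ w, a (w, 1) = b (w, 0)) {w : W} {t : I}
    (ht : (t : ℝ) ≤ 1 / 2) {s : I} (hs : (s : ℝ) = 2 * (t : ℝ)) :
    concatH a b hab (w, t) = a (w, s) := by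
  show (if ((t : ℝ)) ≤ 1 / 2 then _ else _) = _
  rw [if_pos ht]
  congr 1
  refine Prod.ext rfl ?_
  apply Subtype.ext
  show min (2 * (t : ℝ)) 1 = (s : ℝ)
  rw [hs, min_eq_left (by nlinarith)]

theorem concatH_of_ge (a b : C(W × I, T)) (hab : ∀ w, a (w, 1) = b (w, 0)) {w : W} {t : I}
    (ht : 1 / 2 ≤ (t : ℝ)) {s : I} (hs : (s : ℝ) = 2 * (t : ℝ) - 1) :
    concatH a b hab (w, t) = b (w, s) := by
  show (if ((t : ℝ)) ≤ 1 / 2 then _ else _) = _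
  by_cases h : (t : ℝ) ≤ 1 / 2
  · have ht2 : (t : ℝ) = 1 / 2 := le_antisymm h ht
    rw [if_pos h]
    have h1 : (⟨min (2 * (t : ℝ)) 1, le_min (by nlinarith [t.2.1]) zero_le_one,
        min_le_right _ _⟩ : I) = (1 : I) := by
      apply Subtype.ext; show min (2 * (t : ℝ)) 1 = 1; rw [ht2]; norm_num
    have h2 : s = (0 : I) := by
      apply Subtype.ext; show (s : ℝ) = 0; rw [hs, ht2]; norm_num
    rw [h1, h2]
    exact hab w
  · rw [if_neg h]
    congr 1
    refine Prod.ext rfl ?_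
    apply Subtype.ext
    show max (2 * (t : ℝ) - 1) 0 = (s : ℝ)
    rw [hs, max_eq_left (by nlinarith [t.2.2])]

theorem concatH_zero (a b : C(W × I, T)) (hab : ∀ w, a (w, 1) = b (w, 0)) (w : W) :
    concatH a b hab (w, 0) = a (w, 0) :=
  concatH_of_le a b hab (by norm_num) (by norm_num)

theorem concatH_one (a b : C(W × I, T)) (hab : ∀ w, a (w, 1) = b (w, 0)) (w : W) :
    concatH a b hab (w, 1) = b (w, 1) :=
  concatH_of_ge a b hab (by norm_num) (by norm_num)

end Concat

/-! ### HPB helpers -/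

section HPBAux

universe v

variable {A B X W : Type u} [TopologicalSpace A] [TopologicalSpace B] [TopologicalSpace X]
  [TopologicalSpace W]

/-- Evaluation of the path component of a point of `HPB`. -/
def HPB.pathEval (f : C(A, X)) (g : C(B, X)) : C(HPB f g × I, X) where
  toFun := fun p => p.1.1.2.1 p.2
  continuous_toFun := by
    have h1 : Continuous fun p : HPB f g × I => (p.1.1.2.1, p.2) :=
      (continuous_fst.comp (continuous_snd.comp
        (continuous_subtype_val.comp continuous_fst))).prodMk continuous_snd
    exact ContinuousEval.continuous_eval.comp h1

theorem HPB.pathEval_zero (f : C(A, X)) (g : C(B, X)) (z : HPB f g) :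
    HPB.pathEval f g (z, 0) = f (HPB.fst f g z) := z.2.1

theorem HPB.pathEval_one (f : C(A, X)) (g : C(B, X)) (z : HPB f g) :
    HPB.pathEval f g (z, 1) = g (HPB.snd f g z) := z.2.2

/-- Constructor for continuous families of points of `HPB`. -/
def HPB.mk' (f : C(A, X)) (g : C(B, X)) (p : C(W, A)) (q : C(W, B)) (γ : C(W × I, X))
    (h0 : ∀ w, γ (w, 0) = f (p w)) (h1 : ∀ w, γ (w, 1) = g (q w)) : C(W, HPB f g) where
  toFun := fun w => ⟨(p w, (γ.curry w, q w)), by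
      refine ⟨?_, ?_⟩
      · show γ.curry w 0 = _
        rw [ContinuousMap.curry_apply]
        exact h0 w
      · show γ.curry w 1 = _
        rw [ContinuousMap.curry_apply]
        exact h1 w⟩
  continuous_toFun := by
    apply Continuous.subtype_mk
    exact p.continuous.prodMk ((γ.curry.continuous).prodMk q.continuous)

theorem HPB.fst_mk' (f : C(A, X)) (g : C(B, X)) (p : C(W, A)) (q : C(W, B)) (γ : C(W × I, X))
    (h0 : ∀ w, γ (w, 0) = f (p w)) (h1 : ∀ w, γ (w, 1) = g (q w)) (w : W) :
    HPB.fst f g (HPB.mk' f g p q γ h0 h1 w) = p w := rfl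

theorem HPB.snd_mk' (f : C(A, X)) (g : C(B, X)) (p : C(W, A)) (q : C(W, B)) (γ : C(W × I, X))
    (h0 : ∀ w, γ (w, 0) = f (p w)) (h1 : ∀ w, γ (w, 1) = g (q w)) (w : W) :
    HPB.snd f g (HPB.mk' f g p q γ h0 h1 w) = q w := rfl

theorem HPB.pathEval_mk' (f : C(A, X)) (g : C(B, X)) (p : C(W, A)) (q : C(W, B)) (γ : C(W × I, X))
    (h0 : ∀ w, γ (w, 0) = f (p w)) (h1 : ∀ w, γ (w, 1) = g (q w)) (w : W) (t : I) :
    HPB.pathEval f g (HPB.mk' f g p q γ h0 h1 w, t) = γ (w, t) := rfl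

end HPBAux

/-! ### HPO helpers -/

section HPOAux

variable {Z A B T : Type u} [TopologicalSpace Z] [TopologicalSpace A] [TopologicalSpace B]
  [TopologicalSpace T]
variable (f : C(Z, A)) (g : C(Z, B))

theorem HPO.inl_eq_cyl (z : Z) : HPO.inl f g (f z) = HPO.cyl f g (z, 0) :=
  Quot.sound (HPORel.left z)

theorem HPO.cyl_eq_inr (z : Z) : HPO.cyl f g (z, 1) = HPO.inr f g (g z) :=
  Quot.sound (HPORel.right z)

theorem HPO.desc_inl (h : C(A, T)) (k : C(B, T))
    (H : ContinuousMap.Homotopy (h.comp f) (k.comp g)) (a : A) :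
    HPO.desc f g h k H (HPO.inl f g a) = h a := rfl

theorem HPO.desc_inr (h : C(A, T)) (k : C(B, T))
    (H : ContinuousMap.Homotopy (h.comp f) (k.comp g)) (b : B) :
    HPO.desc f g h k H (HPO.inr f g b) = k b := rfl

theorem HPO.desc_cyl (h : C(A, T)) (k : C(B, T))
    (H : ContinuousMap.Homotopy (h.comp f) (k.comp g)) (zt : Z × I) :
    HPO.desc f g h k H (HPO.cyl f g zt) = H (zt.2, zt.1) := rfl

/-- The tautological homotopy over the cylinder of an `HPO`. -/
def HPO.cylHomotopy :
    ContinuousMap.Homotopy ((HPO.inl f g).comp f) ((HPO.inr f g).comp g) where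
  toFun := fun p => HPO.cyl f g (p.2, p.1)
  continuous_toFun := (HPO.cyl f g).continuous.comp (continuous_snd.prodMk continuous_fst)
  map_zero_left := fun z => (HPO.inl_eq_cyl f g z).symm
  map_one_left := fun z => HPO.cyl_eq_inr f g z

/-- Building homotopies between maps out of an `HPO`. -/
def HPO.mkHomotopy (F G : C(HPO f g, T)) (K : (A ⊕ (Z × I ⊕ B)) → C(I, T))
    (hK : Continuous K)
    (hrel : ∀ x y, HPORel f g x y → K x = K y)
    (h0 : ∀ x, K x 0 = F (Quot.mk _ x)) (h1 : ∀ x, K x 1 = G (Quot.mk _ x)) :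
    ContinuousMap.Homotopy F G where
  toFun := fun p => Quot.lift K hrel p.2 p.1
  continuous_toFun := by
    have h1 : Continuous fun p : I × HPO f g => (Quot.lift K hrel p.2, p.1) :=
      ((continuous_quot_lift hrel hK).comp continuous_snd).prodMk continuous_fst
    exact ContinuousEval.continuous_eval.comp h1
  map_zero_left := fun w => by
    induction w using Quot.ind with
    | _ x => exact h0 x
  map_one_left := fun w => by
    induction w using Quot.ind with
    | _ x => exact h1 x

/-- The cylinder coordinate of an `HPO`. -/
def HPO.coord : C(HPO f g, I) where
  toFun := Quot.lift (Sum.elim (fun _ => 0) (Sum.elim (fun zt => zt.2) fun _ => 1)) (by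
    rintro x y (⟨z⟩ | ⟨z⟩) <;> rfl)
  continuous_toFun := continuous_quot_lift _ (Continuous.sumElim continuous_const
    (Continuous.sumElim continuous_snd continuous_const))

theorem HPO.coord_inl (a : A) : HPO.coord f g (HPO.inl f g a) = 0 := rfl
theorem HPO.coord_cyl (zt : Z × I) : HPO.coord f g (HPO.cyl f g zt) = zt.2 := rfl
theorem HPO.coord_inr (b : B) : HPO.coord f g (HPO.inr f g b) = 1 := rfl

end HPOAux
/-! ### Partial descents out of the ends of an `HPO` -/

section HPODesc

variable {Z A B T : Type u} [TopologicalSpace Z] [TopologicalSpace A] [TopologicalSpace B]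
  [TopologicalSpace T]
variable (f : C(Z, A)) (g : C(Z, B))

private def leftBareFun (fA : C(A, T)) (fZ : C(Z × I, T)) (h0 : ∀ z, fZ (z, 0) = fA (f z)) :
    HPO f g → Option T :=
  Quot.lift (Sum.elim (fun a => some (fA a))
    (Sum.elim (fun zt => if zt.2 = 1 then none else some (fZ zt)) fun _ => none)) (by
      rintro x y (⟨z⟩ | ⟨z⟩)
      · have : ((0 : I) = 1) = False := by
          simp only [eq_iff_iff, iff_false]
          intro h
          have := Subtype.ext_iff.mp h
          norm_num at this
        simp only [Sum.elim_inl, Sum.elim_inr, this, if_false, h0 z]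
      · simp)

private theorem leftBare_isSome (fA : C(A, T)) (fZ : C(Z × I, T))
    (h0 : ∀ z, fZ (z, 0) = fA (f z)) :
    ∀ w : HPO f g, HPO.coord f g w ≠ 1 → (leftBareFun f g fA fZ h0 w).isSome := by
  intro w
  induction w using Quot.ind with
  | _ x =>
    rcases x with a | ⟨⟨z, s⟩ | b⟩
    · intro _; rfl
    · intro hs
      have hs' : s ≠ 1 := hs
      show (if s = 1 then none else some (fZ (z, s))).isSome
      rw [if_neg hs']
      rfl
    · intro hs; exact absurd rfl hs

/-- Descent of compatible data on the left end `{coord ≠ 1}` of an `HPO`. -/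
noncomputable def HPO.descLeft (fA : C(A, T)) (fZ : C(Z × I, T))
    (h0 : ∀ z, fZ (z, 0) = fA (f z)) :
    C({w : HPO f g // HPO.coord f g w ≠ 1}, T) where
  toFun := fun w => (leftBareFun f g fA fZ h0 w.1).get (leftBare_isSome f g fA fZ h0 w.1 w.2)
  continuous_toFun := by
    rw [continuous_def]
    intro O hO
    set Wset : Set (A ⊕ (Z × I ⊕ B)) :=
      (Sum.inl '' (fA ⁻¹' O)) ∪
        (Sum.inr '' (Sum.inl '' {zt : Z × I | zt.2 ≠ 1 ∧ fZ zt ∈ O})) with hWdef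
    have hWopen : IsOpen Wset := by
      apply IsOpen.union
      · exact isOpenMap_inl _ (hO.preimage fA.continuous)
      · apply isOpenMap_inr
        apply isOpenMap_inl
        exact ((isOpen_ne_fun continuous_snd continuous_const).inter
          (hO.preimage fZ.continuous))
    have hmemL : ∀ a : A, Sum.inl a ∈ Wset ↔ fA a ∈ O := by
      intro a
      constructor
      · rintro (⟨a', ha', heq⟩ | ⟨x, _, heq⟩)
        · cases heq; exact ha'
        · cases heq
      · intro h
        exact Or.inl ⟨a, h, rfl⟩
    have hmemC : ∀ zt : Z × I, (Sum.inr (Sum.inl zt) : A ⊕ (Z × I ⊕ B)) ∈ Wset ↔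
        (zt.2 ≠ 1 ∧ fZ zt ∈ O) := by
      intro zt
      constructor
      · rintro (⟨a', _, heq⟩ | ⟨x, hx, heq⟩)
        · cases heq
        · cases heq
          obtain ⟨zt', hzt', heq'⟩ := hx
          cases heq'
          exact hzt'
      · intro h
        exact Or.inr ⟨Sum.inl zt, ⟨zt, h, rfl⟩, rfl⟩
    have hmemR : ∀ b : B, (Sum.inr (Sum.inr b) : A ⊕ (Z × I ⊕ B)) ∉ Wset := by
      rintro b (⟨a', _, heq⟩ | ⟨x, hx, heq⟩)
      · cases heq
      · cases heq
        obtain ⟨zt', _, heq'⟩ := hx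
        cases heq'
    have hsat : ∀ x y, HPORel f g x y → (x ∈ Wset ↔ y ∈ Wset) := by
      rintro x y (⟨z⟩ | ⟨z⟩)
      · rw [hmemL, hmemC]
        have h01 : ((z, (0 : I)).2 ≠ 1) := by
          intro hq
          have := Subtype.ext_iff.mp hq
          norm_num at this
        constructor
        · intro hm
          exact ⟨h01, by rw [h0 z]; exact hm⟩
        · rintro ⟨-, hm⟩
          rw [h0 z] at hm
          exact hm
      · rw [hmemC]
        constructor
        · rintro ⟨habs, -⟩
          exact absurd rfl habs
        · intro hm
          exact absurd hm (hmemR (g z))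
    have hsat' : ∀ x y, Quot.mk (HPORel f g) x = Quot.mk (HPORel f g) y →
        (x ∈ Wset ↔ y ∈ Wset) := by
      intro x y h
      have hE := Quot.eqvGen_exact h
      clear h
      induction hE with
      | rel _ _ h => exact hsat _ _ h
      | refl => exact Iff.rfl
      | symm _ _ _ ih => exact ih.symm
      | trans _ _ _ _ _ ih1 ih2 => exact ih1.trans ih2
    set Oq : Set (HPO f g) := {q | ∃ x ∈ Wset, Quot.mk (HPORel f g) x = q} with hOq
    have hOqopen : IsOpen Oq := by
      show IsOpen (Quot.mk (HPORel f g) ⁻¹' Oq)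
      have : Quot.mk (HPORel f g) ⁻¹' Oq = Wset := by
        ext x
        constructor
        · rintro ⟨x', hx', hq⟩
          exact (hsat' x' x hq).mp hx'
        · intro hx
          exact ⟨x, hx, rfl⟩
      rw [this]
      exact hWopen
    have hchar : ∀ (w : HPO f g) (hw : HPO.coord f g w ≠ 1),
        ((leftBareFun f g fA fZ h0 w).get (leftBare_isSome f g fA fZ h0 w hw) ∈ O ↔
          w ∈ Oq) := by
      intro w
      induction w using Quot.ind with
      | _ x =>
        rcases x with a | ⟨⟨z, s⟩ | b⟩
        · intro hw
          show fA a ∈ O ↔ _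
          constructor
          · intro h
            exact ⟨Sum.inl a, (hmemL a).mpr h, rfl⟩
          · rintro ⟨x', hx', hq⟩
            exact (hmemL a).mp ((hsat' x' (Sum.inl a) hq).mp hx')
        · intro hw
          have hs : s ≠ 1 := hw
          have hval : (leftBareFun f g fA fZ h0 (Quot.mk (HPORel f g)
              (Sum.inr (Sum.inl (z, s))))).get
              (leftBare_isSome f g fA fZ h0 _ hw) = fZ (z, s) := by
            apply Option.some_injective
            rw [Option.some_get]
            show (if s = 1 then none else some (fZ (z, s))) = _
            rw [if_neg hs]
          rw [hval]
          constructor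
          · intro h
            exact ⟨Sum.inr (Sum.inl (z, s)), (hmemC (z, s)).mpr ⟨hs, h⟩, rfl⟩
          · rintro ⟨x', hx', hq⟩
            exact ((hmemC (z, s)).mp ((hsat' x' _ hq).mp hx')).2
        · intro hw
          exact absurd rfl hw
    have hpre : (fun w : {w : HPO f g // HPO.coord f g w ≠ 1} =>
        (leftBareFun f g fA fZ h0 w.1).get (leftBare_isSome f g fA fZ h0 w.1 w.2)) ⁻¹' O =
        Subtype.val ⁻¹' Oq := by
      ext w
      rw [Set.mem_preimage, Set.mem_preimage]
      exact hchar w.1 w.2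
    rw [hpre]
    exact hOqopen.preimage continuous_subtype_val

theorem HPO.descLeft_mk_inl (fA : C(A, T)) (fZ : C(Z × I, T)) (h0 : ∀ z, fZ (z, 0) = fA (f z))
    (a : A) (h : HPO.coord f g (Quot.mk (HPORel f g) (Sum.inl a)) ≠ 1) :
    HPO.descLeft f g fA fZ h0 ⟨Quot.mk (HPORel f g) (Sum.inl a), h⟩ = fA a := rfl

theorem HPO.descLeft_mk_cyl (fA : C(A, T)) (fZ : C(Z × I, T)) (h0 : ∀ z, fZ (z, 0) = fA (f z))
    (zt : Z × I) (h : HPO.coord f g (Quot.mk (HPORel f g) (Sum.inr (Sum.inl zt))) ≠ 1) :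
    HPO.descLeft f g fA fZ h0 ⟨Quot.mk (HPORel f g) (Sum.inr (Sum.inl zt)), h⟩ = fZ zt := by
  have hs : zt.2 ≠ 1 := h
  apply Option.some_injective
  rw [show some (HPO.descLeft f g fA fZ h0 ⟨Quot.mk (HPORel f g) (Sum.inr (Sum.inl zt)), h⟩) =
    leftBareFun f g fA fZ h0 (Quot.mk (HPORel f g) (Sum.inr (Sum.inl zt))) from
      Option.some_get _]
  show (if zt.2 = 1 then none else some (fZ zt)) = _
  rw [if_neg hs]

theorem HPO.descLeft_inl (fA : C(A, T)) (fZ : C(Z × I, T)) (h0 : ∀ z, fZ (z, 0) = fA (f z))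
    (a : A) (h : HPO.coord f g (HPO.inl f g a) ≠ 1) :
    HPO.descLeft f g fA fZ h0 ⟨HPO.inl f g a, h⟩ = fA a := rfl

theorem HPO.descLeft_cyl (fA : C(A, T)) (fZ : C(Z × I, T)) (h0 : ∀ z, fZ (z, 0) = fA (f z))
    (zt : Z × I) (h : HPO.coord f g (HPO.cyl f g zt) ≠ 1) :
    HPO.descLeft f g fA fZ h0 ⟨HPO.cyl f g zt, h⟩ = fZ zt := by
  have hs : zt.2 ≠ 1 := h
  show (leftBareFun f g fA fZ h0 _).get _ = _
  apply Option.some_injective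
  rw [Option.some_get]
  show (if zt.2 = 1 then none else some (fZ zt)) = _
  rw [if_neg hs]

end HPODesc
section HPODescR

variable {Z A B T : Type u} [TopologicalSpace Z] [TopologicalSpace A] [TopologicalSpace B]
  [TopologicalSpace T]
variable (f : C(Z, A)) (g : C(Z, B))

private def rightBareFun (fB : C(B, T)) (fZ : C(Z × I, T)) (h1 : ∀ z, fZ (z, 1) = fB (g z)) :
    HPO f g → Option T :=
  Quot.lift (Sum.elim (fun _ => none)
    (Sum.elim (fun zt => if zt.2 = 0 then none else some (fZ zt)) fun b => some (fB b))) (by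
      rintro x y (⟨z⟩ | ⟨z⟩)
      · simp
      · have h10 : (((z, (1 : I)).2 = 0)) = False := by
          simp only [eq_iff_iff, iff_false]
          intro h
          have := Subtype.ext_iff.mp h
          norm_num at this
        simp only [Sum.elim_inl, Sum.elim_inr, h10, if_false, h1 z])

private theorem rightBare_isSome (fB : C(B, T)) (fZ : C(Z × I, T))
    (h1 : ∀ z, fZ (z, 1) = fB (g z)) :
    ∀ w : HPO f g, HPO.coord f g w ≠ 0 → (rightBareFun f g fB fZ h1 w).isSome := by
  intro w
  induction w using Quot.ind with
  | _ x =>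
    rcases x with a | ⟨⟨z, s⟩ | b⟩
    · intro hs; exact absurd rfl hs
    · intro hs
      have hs' : s ≠ 0 := hs
      show (if s = 0 then none else some (fZ (z, s))).isSome
      rw [if_neg hs']
      rfl
    · intro _; rfl

/-- Descent of compatible data on the right end `{coord ≠ 0}` of an `HPO`. -/
noncomputable def HPO.descRight (fB : C(B, T)) (fZ : C(Z × I, T))
    (h1 : ∀ z, fZ (z, 1) = fB (g z)) :
    C({w : HPO f g // HPO.coord f g w ≠ 0}, T) where
  toFun := fun w => (rightBareFun f g fB fZ h1 w.1).get (rightBare_isSome f g fB fZ h1 w.1 w.2)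
  continuous_toFun := by
    rw [continuous_def]
    intro O hO
    set Wset : Set (A ⊕ (Z × I ⊕ B)) :=
      (Sum.inr '' (Sum.inr '' (fB ⁻¹' O))) ∪
        (Sum.inr '' (Sum.inl '' {zt : Z × I | zt.2 ≠ 0 ∧ fZ zt ∈ O})) with hWdef
    have hWopen : IsOpen Wset := by
      apply IsOpen.union
      · exact isOpenMap_inr _ (isOpenMap_inr _ (hO.preimage fB.continuous))
      · exact isOpenMap_inr _ (isOpenMap_inl _
          ((isOpen_ne_fun continuous_snd continuous_const).inter (hO.preimage fZ.continuous)))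
    have hmemR : ∀ b : B, (Sum.inr (Sum.inr b) : A ⊕ (Z × I ⊕ B)) ∈ Wset ↔ fB b ∈ O := by
      intro b
      constructor
      · rintro (⟨x, hx, heq⟩ | ⟨x, hx, heq⟩)
        · cases heq
          obtain ⟨b', hb', heq'⟩ := hx
          cases heq'
          exact hb'
        · cases heq
          obtain ⟨zt', _, heq'⟩ := hx
          cases heq'
      · intro h
        exact Or.inl ⟨Sum.inr b, ⟨b, h, rfl⟩, rfl⟩
    have hmemC : ∀ zt : Z × I, (Sum.inr (Sum.inl zt) : A ⊕ (Z × I ⊕ B)) ∈ Wset ↔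
        (zt.2 ≠ 0 ∧ fZ zt ∈ O) := by
      intro zt
      constructor
      · rintro (⟨x, hx, heq⟩ | ⟨x, hx, heq⟩)
        · cases heq
          obtain ⟨b', _, heq'⟩ := hx
          cases heq'
        · cases heq
          obtain ⟨zt', hzt', heq'⟩ := hx
          cases heq'
          exact hzt'
      · intro h
        exact Or.inr ⟨Sum.inl zt, ⟨zt, h, rfl⟩, rfl⟩
    have hmemL : ∀ a : A, (Sum.inl a : A ⊕ (Z × I ⊕ B)) ∉ Wset := by
      rintro a (⟨x, _, heq⟩ | ⟨x, _, heq⟩) <;> cases heq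
    have hsat : ∀ x y, HPORel f g x y → (x ∈ Wset ↔ y ∈ Wset) := by
      rintro x y (⟨z⟩ | ⟨z⟩)
      · rw [hmemC]
        constructor
        · intro hm
          exact absurd hm (hmemL (f z))
        · rintro ⟨habs, -⟩
          exact absurd rfl habs
      · rw [hmemC, hmemR]
        have h10 : ((z, (1 : I)).2 ≠ 0) := by
          intro hq
          have := Subtype.ext_iff.mp hq
          norm_num at this
        constructor
        · rintro ⟨-, hm⟩
          rw [h1 z] at hm
          exact hm
        · intro hm
          exact ⟨h10, by rw [h1 z]; exact hm⟩
    have hsat' : ∀ x y, Quot.mk (HPORel f g) x = Quot.mk (HPORel f g) y →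
        (x ∈ Wset ↔ y ∈ Wset) := by
      intro x y h
      have hE := Quot.eqvGen_exact h
      clear h
      induction hE with
      | rel _ _ h => exact hsat _ _ h
      | refl => exact Iff.rfl
      | symm _ _ _ ih => exact ih.symm
      | trans _ _ _ _ _ ih1 ih2 => exact ih1.trans ih2
    set Oq : Set (HPO f g) := {q | ∃ x ∈ Wset, Quot.mk (HPORel f g) x = q} with hOq
    have hOqopen : IsOpen Oq := by
      show IsOpen (Quot.mk (HPORel f g) ⁻¹' Oq)
      have : Quot.mk (HPORel f g) ⁻¹' Oq = Wset := by
        ext x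
        constructor
        · rintro ⟨x', hx', hq⟩
          exact (hsat' x' x hq).mp hx'
        · intro hx
          exact ⟨x, hx, rfl⟩
      rw [this]
      exact hWopen
    have hchar : ∀ (w : HPO f g) (hw : HPO.coord f g w ≠ 0),
        ((rightBareFun f g fB fZ h1 w).get (rightBare_isSome f g fB fZ h1 w hw) ∈ O ↔
          w ∈ Oq) := by
      intro w
      induction w using Quot.ind with
      | _ x =>
        rcases x with a | ⟨⟨z, s⟩ | b⟩
        · intro hw
          exact absurd rfl hw
        · intro hw
          have hs : s ≠ 0 := hw
          have hval : (rightBareFun f g fB fZ h1 (Quot.mk (HPORel f g)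
              (Sum.inr (Sum.inl (z, s))))).get
              (rightBare_isSome f g fB fZ h1 _ hw) = fZ (z, s) := by
            apply Option.some_injective
            rw [Option.some_get]
            show (if s = 0 then none else some (fZ (z, s))) = _
            rw [if_neg hs]
          rw [hval]
          constructor
          · intro h
            exact ⟨Sum.inr (Sum.inl (z, s)), (hmemC (z, s)).mpr ⟨hs, h⟩, rfl⟩
          · rintro ⟨x', hx', hq⟩
            exact ((hmemC (z, s)).mp ((hsat' x' _ hq).mp hx')).2
        · intro hw
          show fB b ∈ O ↔ _
          constructor
          · intro h
            exact ⟨Sum.inr (Sum.inr b), (hmemR b).mpr h, rfl⟩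
          · rintro ⟨x', hx', hq⟩
            exact (hmemR b).mp ((hsat' x' _ hq).mp hx')
    have hpre : (fun w : {w : HPO f g // HPO.coord f g w ≠ 0} =>
        (rightBareFun f g fB fZ h1 w.1).get (rightBare_isSome f g fB fZ h1 w.1 w.2)) ⁻¹' O =
        Subtype.val ⁻¹' Oq := by
      ext w
      rw [Set.mem_preimage, Set.mem_preimage]
      exact hchar w.1 w.2
    rw [hpre]
    exact hOqopen.preimage continuous_subtype_val

theorem HPO.descRight_mk_inr (fB : C(B, T)) (fZ : C(Z × I, T)) (h1 : ∀ z, fZ (z, 1) = fB (g z))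
    (b : B) (h : HPO.coord f g (Quot.mk (HPORel f g) (Sum.inr (Sum.inr b))) ≠ 0) :
    HPO.descRight f g fB fZ h1 ⟨Quot.mk (HPORel f g) (Sum.inr (Sum.inr b)), h⟩ = fB b := rfl

theorem HPO.descRight_mk_cyl (fB : C(B, T)) (fZ : C(Z × I, T)) (h1 : ∀ z, fZ (z, 1) = fB (g z))
    (zt : Z × I) (h : HPO.coord f g (Quot.mk (HPORel f g) (Sum.inr (Sum.inl zt))) ≠ 0) :
    HPO.descRight f g fB fZ h1 ⟨Quot.mk (HPORel f g) (Sum.inr (Sum.inl zt)), h⟩ = fZ zt := by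
  have hs : zt.2 ≠ 0 := h
  apply Option.some_injective
  rw [show some (HPO.descRight f g fB fZ h1 ⟨Quot.mk (HPORel f g) (Sum.inr (Sum.inl zt)), h⟩) =
    rightBareFun f g fB fZ h1 (Quot.mk (HPORel f g) (Sum.inr (Sum.inl zt))) from
      Option.some_get _]
  show (if zt.2 = 0 then none else some (fZ zt)) = _
  rw [if_neg hs]

theorem HPO.descRight_inr (fB : C(B, T)) (fZ : C(Z × I, T)) (h1 : ∀ z, fZ (z, 1) = fB (g z))
    (b : B) (h : HPO.coord f g (HPO.inr f g b) ≠ 0) :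
    HPO.descRight f g fB fZ h1 ⟨HPO.inr f g b, h⟩ = fB b := rfl

theorem HPO.descRight_cyl (fB : C(B, T)) (fZ : C(Z × I, T)) (h1 : ∀ z, fZ (z, 1) = fB (g z))
    (zt : Z × I) (h : HPO.coord f g (HPO.cyl f g zt) ≠ 0) :
    HPO.descRight f g fB fZ h1 ⟨HPO.cyl f g zt, h⟩ = fZ zt := by
  have hs : zt.2 ≠ 0 := h
  show (rightBareFun f g fB fZ h1 _).get _ = _
  apply Option.some_injective
  rw [Option.some_get]
  show (if zt.2 = 0 then none else some (fZ zt)) = _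
  rw [if_neg hs]

end HPODescR
/-! ### Functoriality of the Ganea construction -/

section GaneaStepAux

variable {A₁ Y₁ A₂ Y₂ G₁ G₂ : Type u} [TopologicalSpace A₁] [TopologicalSpace Y₁]
  [TopologicalSpace A₂] [TopologicalSpace Y₂] [TopologicalSpace G₁] [TopologicalSpace G₂]

/-- The generic one-step Ganea extension of a map `gm : G → Y` under `ι : A → Y`. -/
noncomputable def gstep (ι₁ : C(A₁, Y₁)) (gm₁ : C(G₁, Y₁)) :
    C(HPO (HPB.snd gm₁ ι₁) (HPB.fst gm₁ ι₁), Y₁) :=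
  HPO.desc (HPB.snd gm₁ ι₁) (HPB.fst gm₁ ι₁) ι₁ gm₁ (HPB.pathHomotopy gm₁ ι₁)

theorem gstep_inl (ι₁ : C(A₁, Y₁)) (gm₁ : C(G₁, Y₁)) (a : A₁) :
    gstep ι₁ gm₁ (HPO.inl _ _ a) = ι₁ a := rfl

theorem gstep_inr (ι₁ : C(A₁, Y₁)) (gm₁ : C(G₁, Y₁)) (v : G₁) :
    gstep ι₁ gm₁ (HPO.inr _ _ v) = gm₁ v := rfl

theorem gstep_cyl (ι₁ : C(A₁, Y₁)) (gm₁ : C(G₁, Y₁)) (z : HPB gm₁ ι₁) (s : I) :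
    gstep ι₁ gm₁ (HPO.cyl _ _ (z, s)) = HPB.pathEval gm₁ ι₁ (z, σ s) := rfl

section Comparison

variable (ι₁ : C(A₁, Y₁)) (ι₂ : C(A₂, Y₂)) (α : C(A₁, A₂)) (β : C(Y₁, Y₂))
  (gm₁ : C(G₁, Y₁)) (gm₂ : C(G₂, Y₂)) (Φ : C(G₁, G₂))
  (Hsq : ContinuousMap.Homotopy (ι₂.comp α) (β.comp ι₁))
  (HΦ : ContinuousMap.Homotopy (gm₂.comp Φ) (β.comp gm₁))

/-- The comparison path family. -/
noncomputable def gsGamma : C(HPB gm₁ ι₁ × I, Y₂) :=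
  concatH
    (HΦ.toContinuousMap.comp
      ⟨fun p => (p.2, HPB.fst gm₁ ι₁ p.1),
        continuous_snd.prodMk ((HPB.fst gm₁ ι₁).continuous.comp continuous_fst)⟩)
    (concatH (β.comp (HPB.pathEval gm₁ ι₁))
      (Hsq.toContinuousMap.comp
        ⟨fun p => (σ p.2, HPB.snd gm₁ ι₁ p.1),
          (continuous_symm.comp continuous_snd).prodMk
            ((HPB.snd gm₁ ι₁).continuous.comp continuous_fst)⟩)
      (fun z => by
        show β (HPB.pathEval gm₁ ι₁ (z, 1)) = Hsq (σ 0, HPB.snd gm₁ ι₁ z)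
        rw [HPB.pathEval_one, unitInterval.symm_zero]
        exact (Hsq.apply_one (HPB.snd gm₁ ι₁ z)).symm))
    (fun z => by
      show HΦ (1, HPB.fst gm₁ ι₁ z) = _
      rw [concatH_zero]
      show _ = β (HPB.pathEval gm₁ ι₁ (z, 0))
      rw [HΦ.apply_one, HPB.pathEval_zero]
      rfl)

theorem gsGamma_zero (z : HPB gm₁ ι₁) :
    gsGamma ι₁ ι₂ α β gm₁ gm₂ Φ Hsq HΦ (z, 0) = gm₂ (Φ (HPB.fst gm₁ ι₁ z)) := by
  rw [gsGamma, concatH_zero]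
  exact HΦ.apply_zero _

theorem gsGamma_one (z : HPB gm₁ ι₁) :
    gsGamma ι₁ ι₂ α β gm₁ gm₂ Φ Hsq HΦ (z, 1) = ι₂ (α (HPB.snd gm₁ ι₁ z)) := by
  rw [gsGamma, concatH_one, concatH_one]
  show Hsq (σ 1, _) = _
  rw [unitInterval.symm_one]
  exact Hsq.apply_zero _

/-- The comparison map between the `HPB`s in one Ganea step. -/
noncomputable def gsTheta : C(HPB gm₁ ι₁, HPB gm₂ ι₂) :=
  HPB.mk' gm₂ ι₂ (Φ.comp (HPB.fst gm₁ ι₁)) (α.comp (HPB.snd gm₁ ι₁))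
    (gsGamma ι₁ ι₂ α β gm₁ gm₂ Φ Hsq HΦ)
    (fun z => gsGamma_zero ι₁ ι₂ α β gm₁ gm₂ Φ Hsq HΦ z)
    (fun z => gsGamma_one ι₁ ι₂ α β gm₁ gm₂ Φ Hsq HΦ z)

/-- The comparison map between one-step Ganea extensions. -/
noncomputable def gsMap :
    C(HPO (HPB.snd gm₁ ι₁) (HPB.fst gm₁ ι₁), HPO (HPB.snd gm₂ ι₂) (HPB.fst gm₂ ι₂)) :=
  HPO.desc (HPB.snd gm₁ ι₁) (HPB.fst gm₁ ι₁)
    ((HPO.inl (HPB.snd gm₂ ι₂) (HPB.fst gm₂ ι₂)).comp α)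
    ((HPO.inr (HPB.snd gm₂ ι₂) (HPB.fst gm₂ ι₂)).comp Φ)
    (ContinuousMap.Homotopy.comp (HPO.cylHomotopy (HPB.snd gm₂ ι₂) (HPB.fst gm₂ ι₂))
      (ContinuousMap.Homotopy.refl (gsTheta ι₁ ι₂ α β gm₁ gm₂ Φ Hsq HΦ)))

theorem gsMap_inl (a : A₁) :
    gsMap ι₁ ι₂ α β gm₁ gm₂ Φ Hsq HΦ (HPO.inl _ _ a) = HPO.inl _ _ (α a) := rfl

theorem gsMap_inr (v : G₁) :
    gsMap ι₁ ι₂ α β gm₁ gm₂ Φ Hsq HΦ (HPO.inr _ _ v) = HPO.inr _ _ (Φ v) := rfl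

theorem gsMap_cyl (z : HPB gm₁ ι₁) (s : I) :
    gsMap ι₁ ι₂ α β gm₁ gm₂ Φ Hsq HΦ (HPO.cyl _ _ (z, s)) =
      HPO.cyl _ _ (gsTheta ι₁ ι₂ α β gm₁ gm₂ Φ Hsq HΦ z, s) := rfl

/-- The `I × I → I` reparametrisation used in the step coherence homotopy. -/
noncomputable def gsC : C(I × I, I) where
  toFun := fun p => ⟨(1 - (p.1 : ℝ)) * (1 - (p.2 : ℝ)) + (p.1 : ℝ) * ((3 - (p.2 : ℝ)) / 4),
    by
      constructor
      · nlinarith [p.1.2.1, p.1.2.2, p.2.2.1, p.2.2.2]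
      · nlinarith [p.1.2.1, p.1.2.2, p.2.2.1, p.2.2.2]⟩
  continuous_toFun := by
    apply Continuous.subtype_mk
    fun_prop

theorem gsC_apply (r s : I) :
    (gsC (r, s) : ℝ) = (1 - (r : ℝ)) * (1 - (s : ℝ)) + (r : ℝ) * ((3 - (s : ℝ)) / 4) := rfl

/-- The coherence homotopy for a Ganea comparison step. -/
noncomputable def gsHomotopy :
    ContinuousMap.Homotopy
      ((gstep ι₂ gm₂).comp (gsMap ι₁ ι₂ α β gm₁ gm₂ Φ Hsq HΦ))
      (β.comp (gstep ι₁ gm₁)) := by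
  refine HPO.mkHomotopy (HPB.snd gm₁ ι₁) (HPB.fst gm₁ ι₁) _ _
    (Sum.elim
      (fun a => ContinuousMap.curry
        (Hsq.toContinuousMap.comp ⟨Prod.swap, continuous_swap⟩) a)
      (Sum.elim
        (fun zs => ContinuousMap.curry
          ((gsGamma ι₁ ι₂ α β gm₁ gm₂ Φ Hsq HΦ).comp
            ⟨fun p => (p.1.1, gsC (p.2, p.1.2)),
              ((continuous_fst.comp continuous_fst)).prodMk
                (gsC.continuous.comp (continuous_snd.prodMk
                  (continuous_snd.comp continuous_fst)))⟩) zs)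
        (fun v => ContinuousMap.curry
          (HΦ.toContinuousMap.comp ⟨Prod.swap, continuous_swap⟩) v)))
    ?_ ?_ ?_ ?_
  · apply Continuous.sumElim
    · exact (ContinuousMap.curry _).continuous
    · apply Continuous.sumElim
      · exact (ContinuousMap.curry _).continuous
      · exact (ContinuousMap.curry _).continuous
  · rintro x y (⟨z⟩ | ⟨z⟩)
    · ext r
      show Hsq (r, HPB.snd gm₁ ι₁ z) =
        gsGamma ι₁ ι₂ α β gm₁ gm₂ Φ Hsq HΦ (z, gsC (r, 0))
      have hge : (1 : ℝ) / 2 ≤ (gsC (r, 0) : ℝ) := by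
        rw [gsC_apply]
        have := r.2.1; have := r.2.2
        norm_num
        nlinarith
      have h2 : ((⟨1 - (r : ℝ) / 2, by constructor <;> nlinarith [r.2.1, r.2.2]⟩ : I) : ℝ) =
          2 * (gsC (r, 0) : ℝ) - 1 := by
        rw [gsC_apply]
        norm_num
        ring
      rw [gsGamma, concatH_of_ge _ _ _ hge h2]
      have hge2 : (1 : ℝ) / 2 ≤ (1 - (r : ℝ) / 2) := by nlinarith [r.2.2]
      have h3 : ((⟨1 - (r : ℝ), by constructor <;> nlinarith [r.2.1, r.2.2]⟩ : I) : ℝ) =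
          2 * (1 - (r : ℝ) / 2) - 1 := by ring
      rw [concatH_of_ge _ _ _ hge2 h3]
      show _ = Hsq (σ _, HPB.snd gm₁ ι₁ z)
      congr 1
      refine Prod.ext ?_ rfl
      apply Subtype.ext
      show (r : ℝ) = 1 - (1 - (r : ℝ))
      ring
    · ext r
      show gsGamma ι₁ ι₂ α β gm₁ gm₂ Φ Hsq HΦ (z, gsC (r, 1)) = HΦ (r, HPB.fst gm₁ ι₁ z)
      have hle : (gsC (r, 1) : ℝ) ≤ 1 / 2 := by
        rw [gsC_apply]
        have := r.2.2
        norm_num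
        nlinarith
      have h2 : ((r : I) : ℝ) = 2 * (gsC (r, 1) : ℝ) := by
        rw [gsC_apply]; norm_num; ring
      rw [gsGamma, concatH_of_le _ _ _ hle h2]
      rfl
  · rintro (a | ⟨⟨z, s⟩ | v⟩)
    · show Hsq (0, a) = gstep ι₂ gm₂ (gsMap ι₁ ι₂ α β gm₁ gm₂ Φ Hsq HΦ
        (HPO.inl (HPB.snd gm₁ ι₁) (HPB.fst gm₁ ι₁) a))
      rw [gsMap_inl, gstep_inl]
      exact Hsq.apply_zero a
    · show gsGamma ι₁ ι₂ α β gm₁ gm₂ Φ Hsq HΦ (z, gsC (0, s)) =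
        gstep ι₂ gm₂ (gsMap ι₁ ι₂ α β gm₁ gm₂ Φ Hsq HΦ
          (HPO.cyl (HPB.snd gm₁ ι₁) (HPB.fst gm₁ ι₁) (z, s)))
      have hcs : gsC (0, s) = σ s := by
        apply Subtype.ext
        rw [gsC_apply]
        show _ = 1 - (s : ℝ)
        norm_num
      rw [hcs, gsMap_cyl, gstep_cyl]
      rfl
    · show HΦ (0, v) = gstep ι₂ gm₂ (gsMap ι₁ ι₂ α β gm₁ gm₂ Φ Hsq HΦ
        (HPO.inr (HPB.snd gm₁ ι₁) (HPB.fst gm₁ ι₁) v))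
      rw [gsMap_inr, gstep_inr]
      exact HΦ.apply_zero v
  · rintro (a | ⟨⟨z, s⟩ | v⟩)
    · show Hsq (1, a) = β (gstep ι₁ gm₁ (HPO.inl (HPB.snd gm₁ ι₁) (HPB.fst gm₁ ι₁) a))
      rw [gstep_inl]
      exact Hsq.apply_one a
    · show gsGamma ι₁ ι₂ α β gm₁ gm₂ Φ Hsq HΦ (z, gsC (1, s)) =
        β (gstep ι₁ gm₁ (HPO.cyl (HPB.snd gm₁ ι₁) (HPB.fst gm₁ ι₁) (z, s)))
      rw [gstep_cyl]
      have hge : (1 : ℝ) / 2 ≤ (gsC (1, s) : ℝ) := by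
        rw [gsC_apply]
        have := s.2.2
        norm_num
        nlinarith
      have h2 : ((⟨(1 - (s : ℝ)) / 2, by constructor <;> nlinarith [s.2.1, s.2.2]⟩ : I) : ℝ) =
          2 * (gsC (1, s) : ℝ) - 1 := by
        rw [gsC_apply]; norm_num; ring
      rw [gsGamma, concatH_of_ge _ _ _ hge h2]
      have hle : ((1 - (s : ℝ)) / 2) ≤ 1 / 2 := by nlinarith [s.2.1]
      have h3 : ((σ s : I) : ℝ) = 2 * ((1 - (s : ℝ)) / 2) := by
        show 1 - (s : ℝ) = _
        ring
      rw [concatH_of_le _ _ _ hle h3]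
      rfl
    · show HΦ (1, v) = β (gstep ι₁ gm₁ (HPO.inr (HPB.snd gm₁ ι₁) (HPB.fst gm₁ ι₁) v))
      rw [gstep_inr]
      exact HΦ.apply_one v

end Comparison

end GaneaStepAux

/-- Functoriality of the Ganea construction along a homotopy-commutative square. -/
noncomputable def ganeaComp {A₁ Y₁ A₂ Y₂ : Type u} [TopologicalSpace A₁] [TopologicalSpace Y₁]
    [TopologicalSpace A₂] [TopologicalSpace Y₂]
    (ι₁ : C(A₁, Y₁)) (ι₂ : C(A₂, Y₂)) (α : C(A₁, A₂)) (β : C(Y₁, Y₂))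
    (Hsq : ContinuousMap.Homotopy (ι₂.comp α) (β.comp ι₁)) :
    ∀ n : ℕ, Σ' (Φ : C((ganea ι₁ n).G, (ganea ι₂ n).G)),
      ContinuousMap.Homotopy ((ganea ι₂ n).g.comp Φ) (β.comp (ganea ι₁ n).g)
  | 0 => ⟨α, Hsq⟩
  | (n + 1) =>
    let ih := ganeaComp ι₁ ι₂ α β Hsq n
    ⟨gsMap ι₁ ι₂ α β (ganea ι₁ n).g (ganea ι₂ n).g ih.1 Hsq ih.2,
      gsHomotopy ι₁ ι₂ α β (ganea ι₁ n).g (ganea ι₂ n).g ih.1 Hsq ih.2⟩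
/-! ### Reparametrisations -/

section Reparam

/-- `(s, t) ↦ 1 - s + t * s`. -/
noncomputable def iL : C(I × I, I) where
  toFun := fun p => ⟨1 - (p.1 : ℝ) + (p.2 : ℝ) * (p.1 : ℝ),
    by constructor <;> nlinarith [p.1.2.1, p.1.2.2, p.2.2.1, p.2.2.2]⟩
  continuous_toFun := by apply Continuous.subtype_mk; fun_prop

theorem iL_zero (t : I) : iL (0, t) = 1 := by
  apply Subtype.ext; show 1 - ((0 : I) : ℝ) + (t : ℝ) * ((0 : I) : ℝ) = 1; norm_num

/-- `(s, t) ↦ (1 - s) * (1 - t)`. -/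
noncomputable def iR : C(I × I, I) where
  toFun := fun p => ⟨(1 - (p.1 : ℝ)) * (1 - (p.2 : ℝ)),
    by constructor <;> nlinarith [p.1.2.1, p.1.2.2, p.2.2.1, p.2.2.2]⟩
  continuous_toFun := by apply Continuous.subtype_mk; fun_prop

theorem iR_one (t : I) : iR (1, t) = 0 := by
  apply Subtype.ext; show (1 - ((1 : I) : ℝ)) * (1 - (t : ℝ)) = 0; norm_num

/-- The collar-squashing reparametrisation. -/
noncomputable def lamI : C(I, I) where
  toFun := fun t => ⟨max 0 (min 1 (3 * (t : ℝ) - 1)),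
    by constructor
       · exact le_max_left _ _
       · exact max_le zero_le_one (min_le_left _ _)⟩
  continuous_toFun := by apply Continuous.subtype_mk; fun_prop

theorem lamI_of_le {t : I} (h : (t : ℝ) ≤ 1 / 3) : lamI t = 0 := by
  apply Subtype.ext
  show max 0 (min 1 (3 * (t : ℝ) - 1)) = 0
  rw [max_eq_left]
  exact min_le_of_right_le (by nlinarith)

theorem lamI_of_ge {t : I} (h : 2 / 3 ≤ (t : ℝ)) : lamI t = 1 := by
  apply Subtype.ext
  show max 0 (min 1 (3 * (t : ℝ) - 1)) = 1
  rw [min_eq_left (by nlinarith), max_eq_right zero_le_one]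

/-- `(r, l) ↦ 1 - (1 - r) * l`. -/
noncomputable def jmix : C(I × I, I) where
  toFun := fun p => ⟨1 - (1 - (p.1 : ℝ)) * (p.2 : ℝ),
    by constructor <;> nlinarith [p.1.2.1, p.1.2.2, p.2.2.1, p.2.2.2]⟩
  continuous_toFun := by apply Continuous.subtype_mk; fun_prop

theorem jmix_zero (l : I) : jmix (0, l) = σ l := by
  apply Subtype.ext
  show 1 - (1 - ((0 : I) : ℝ)) * (l : ℝ) = 1 - (l : ℝ)
  norm_num

theorem jmix_one (l : I) : jmix (1, l) = 1 := by
  apply Subtype.ext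
  show 1 - (1 - ((1 : I) : ℝ)) * (l : ℝ) = 1
  norm_num

theorem jmix_right_zero (r : I) : jmix (r, 0) = 1 := by
  apply Subtype.ext
  show 1 - (1 - (r : ℝ)) * ((0 : I) : ℝ) = 1
  norm_num

theorem jmix_right_one (r : I) : jmix (r, 1) = ⟨(r : ℝ), r.2⟩ := by
  apply Subtype.ext
  show 1 - (1 - (r : ℝ)) * ((1 : I) : ℝ) = (r : ℝ)
  norm_num

end Reparam
/-! ### Sections of the pulled-back Ganea fibrations -/

section PullSection

variable {A X : Type u} [TopologicalSpace A] [TopologicalSpace X]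

theorem pullSection (ιX : C(A, X)) :
    ∀ (n : ℕ) {Y : Type u} [TopologicalSpace Y] (f : C(Y, X))
      (h : C(Y, (ganea ιX n).G)) (H : ((ganea ιX n).g.comp h).Homotopic f),
      ∃ s : C(Y, (ganea (HPB.fst f ιX) n).G),
        ((ganea (HPB.fst f ιX) n).g.comp s).Homotopic (ContinuousMap.id Y) := by
  intro n
  induction n with
  | zero =>
    intro Y _ f h H
    obtain ⟨Hh⟩ := H
    refine ⟨HPB.mk' f ιX (ContinuousMap.id Y) h
      ⟨fun p => Hh (σ p.2, p.1),
        Hh.continuous.comp ((continuous_symm.comp continuous_snd).prodMk continuous_fst)⟩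
      (fun y => by
        show Hh (σ 0, y) = f (ContinuousMap.id Y y)
        rw [unitInterval.symm_zero]
        exact Hh.apply_one y)
      (fun y => by
        show Hh (σ 1, y) = ιX (h y)
        rw [unitInterval.symm_one]
        exact Hh.apply_zero y), ?_⟩
    exact ⟨(ContinuousMap.Homotopy.refl (ContinuousMap.id Y)).cast (by ext y; rfl) rfl⟩
  | succ n ih =>
    intro Y instY f h H
    obtain ⟨Hh⟩ := H
    classical
    -- abbreviations for the two legs of the `(n+1)`-st Ganea space of `ιX`
    let sn : C(HPB (ganea ιX n).g ιX, A) := HPB.snd (ganea ιX n).g ιX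
    let fn : C(HPB (ganea ιX n).g ιX, (ganea ιX n).G) := HPB.fst (ganea ιX n).g ιX
    let co : C(Y, I) := (HPO.coord sn fn).comp h
    have ne1of : ∀ {y : Y}, (co y : ℝ) < 1 → co y ≠ 1 := by
      intro y hy he
      rw [he] at hy
      norm_num at hy
    have ne0of : ∀ {y : Y}, 0 < (co y : ℝ) → co y ≠ 0 := by
      intro y hy he
      rw [he] at hy
      norm_num at hy
    -- the reversed homotopy, as a family of paths from `f y` to `g (h y)`
    let Hbar : C(Y × I, X) := ⟨fun p => Hh (σ p.2, p.1),
      Hh.continuous.comp ((continuous_symm.comp continuous_snd).prodMk continuous_fst)⟩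
    have Hbar0 : ∀ y : Y, Hbar (y, 0) = f y := by
      intro y
      show Hh (σ 0, y) = f y
      rw [unitInterval.symm_zero]
      exact Hh.apply_one y
    have Hbar1 : ∀ y : Y, Hbar (y, 1) = gstep ιX (ganea ιX n).g (h y) := by
      intro y
      show Hh (σ 1, y) = _
      rw [unitInterval.symm_one]
      exact Hh.apply_zero y
    -- left shadow data
    let lA : C({w : HPO sn fn // HPO.coord sn fn w ≠ 1}, A) :=
      HPO.descLeft sn fn (ContinuousMap.id A) (sn.comp ⟨Prod.fst, continuous_fst⟩)
        (fun z => rfl)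
    let lP : C({w : HPO sn fn // HPO.coord sn fn w ≠ 1}, C(I, X)) :=
      HPO.descLeft sn fn (ContinuousMap.curry ⟨fun p : A × I => ιX p.1,
          ιX.continuous.comp continuous_fst⟩)
        (ContinuousMap.curry ⟨fun p : (HPB (ganea ιX n).g ιX × I) × I =>
            HPB.pathEval (ganea ιX n).g ιX (p.1.1, iL (p.1.2, p.2)),
          (HPB.pathEval (ganea ιX n).g ιX).continuous.comp
            ((continuous_fst.comp continuous_fst).prodMk (iL.continuous.comp
              ((continuous_snd.comp continuous_fst).prodMk continuous_snd)))⟩)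
        (fun z => by
          ext t
          show HPB.pathEval (ganea ιX n).g ιX (z, iL (0, t)) = ιX (sn z)
          rw [iL_zero]
          exact HPB.pathEval_one (ganea ιX n).g ιX z)
    have lemL0 : ∀ (w : HPO sn fn) (hw : HPO.coord sn fn w ≠ 1),
        lP ⟨w, hw⟩ 0 = gstep ιX (ganea ιX n).g w := by
      intro w
      induction w using Quot.ind with
      | _ x =>
        rcases x with a | ⟨⟨z, s⟩ | v⟩
        · intro hw
          unfold lP
          rw [HPO.descLeft_mk_inl]
          rfl
        · intro hw
          unfold lP
          rw [HPO.descLeft_mk_cyl]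
          show HPB.pathEval (ganea ιX n).g ιX (z, iL (s, 0)) =
            HPB.pathEval (ganea ιX n).g ιX (z, σ s)
          congr 1
          refine Prod.ext rfl ?_
          apply Subtype.ext
          show 1 - (s : ℝ) + ((0 : I) : ℝ) * (s : ℝ) = 1 - (s : ℝ)
          norm_num
        · intro hw
          exact absurd rfl hw
    have lemL1 : ∀ (w : HPO sn fn) (hw : HPO.coord sn fn w ≠ 1),
        lP ⟨w, hw⟩ 1 = ιX (lA ⟨w, hw⟩) := by
      intro w
      induction w using Quot.ind with
      | _ x =>
        rcases x with a | ⟨⟨z, s⟩ | v⟩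
        · intro hw
          unfold lP lA
          rw [HPO.descLeft_mk_inl]
          rfl
        · intro hw
          unfold lP
          rw [HPO.descLeft_mk_cyl]
          rw [show lA ⟨Quot.mk (HPORel sn fn) (Sum.inr (Sum.inl (z, s))), hw⟩ = sn z from
            HPO.descLeft_mk_cyl sn fn _ _ _ (z, s) hw]
          show HPB.pathEval (ganea ιX n).g ιX (z, iL (s, 1)) = ιX (sn z)
          have : iL (s, 1) = 1 := by
            apply Subtype.ext
            show 1 - (s : ℝ) + ((1 : I) : ℝ) * (s : ℝ) = 1
            norm_num
          rw [this]
          exact HPB.pathEval_one (ganea ιX n).g ιX z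
        · intro hw
          exact absurd rfl hw
    -- right shadow data
    let rV : C({w : HPO sn fn // HPO.coord sn fn w ≠ 0}, (ganea ιX n).G) :=
      HPO.descRight sn fn (ContinuousMap.id _) (fn.comp ⟨Prod.fst, continuous_fst⟩)
        (fun z => rfl)
    let rP : C({w : HPO sn fn // HPO.coord sn fn w ≠ 0}, C(I, X)) :=
      HPO.descRight sn fn (ContinuousMap.curry ⟨fun p : (ganea ιX n).G × I =>
            (ganea ιX n).g p.1, (ganea ιX n).g.continuous.comp continuous_fst⟩)
        (ContinuousMap.curry ⟨fun p : (HPB (ganea ιX n).g ιX × I) × I =>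
            HPB.pathEval (ganea ιX n).g ιX (p.1.1, iR (p.1.2, p.2)),
          (HPB.pathEval (ganea ιX n).g ιX).continuous.comp
            ((continuous_fst.comp continuous_fst).prodMk (iR.continuous.comp
              ((continuous_snd.comp continuous_fst).prodMk continuous_snd)))⟩)
        (fun z => by
          ext t
          show HPB.pathEval (ganea ιX n).g ιX (z, iR (1, t)) = (ganea ιX n).g (fn z)
          rw [iR_one]
          exact HPB.pathEval_zero (ganea ιX n).g ιX z)
    have lemR0 : ∀ (w : HPO sn fn) (hw : HPO.coord sn fn w ≠ 0),
        rP ⟨w, hw⟩ 0 = gstep ιX (ganea ιX n).g w := by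
      intro w
      induction w using Quot.ind with
      | _ x =>
        rcases x with a | ⟨⟨z, s⟩ | v⟩
        · intro hw
          exact absurd rfl hw
        · intro hw
          unfold rP
          rw [HPO.descRight_mk_cyl]
          show HPB.pathEval (ganea ιX n).g ιX (z, iR (s, 0)) =
            HPB.pathEval (ganea ιX n).g ιX (z, σ s)
          congr 1
          refine Prod.ext rfl ?_
          apply Subtype.ext
          show (1 - (s : ℝ)) * (1 - ((0 : I) : ℝ)) = 1 - (s : ℝ)
          norm_num
        · intro hw
          unfold rP
          rw [HPO.descRight_mk_inr]
          rfl
    have lemR1 : ∀ (w : HPO sn fn) (hw : HPO.coord sn fn w ≠ 0),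
        rP ⟨w, hw⟩ 1 = (ganea ιX n).g (rV ⟨w, hw⟩) := by
      intro w
      induction w using Quot.ind with
      | _ x =>
        rcases x with a | ⟨⟨z, s⟩ | v⟩
        · intro hw
          exact absurd rfl hw
        · intro hw
          unfold rP
          rw [HPO.descRight_mk_cyl]
          rw [show rV ⟨Quot.mk (HPORel sn fn) (Sum.inr (Sum.inl (z, s))), hw⟩ = fn z from
            HPO.descRight_mk_cyl sn fn _ _ _ (z, s) hw]
          show HPB.pathEval (ganea ιX n).g ιX (z, iR (s, 1)) = (ganea ιX n).g (fn z)
          have : iR (s, 1) = 0 := by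
            apply Subtype.ext
            show (1 - (s : ℝ)) * (1 - ((1 : I) : ℝ)) = 0
            norm_num
          rw [this]
          exact HPB.pathEval_zero (ganea ιX n).g ιX z
        · intro hw
          unfold rP rV
          rw [HPO.descRight_mk_inr]
          rfl
    -- the left piece `P₀` over `Y₀ = {co ≠ 1}`
    let hY₀ : C({y : Y // co y ≠ 1}, {w : HPO sn fn // HPO.coord sn fn w ≠ 1}) :=
      ⟨fun y => ⟨h y.1, y.2⟩,
        Continuous.subtype_mk (h.continuous.comp continuous_subtype_val) _⟩
    let P₀fam : C({y : Y // co y ≠ 1} × I, X) :=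
      concatH (Hbar.comp ⟨fun p => (p.1.1, p.2),
          (continuous_subtype_val.comp continuous_fst).prodMk continuous_snd⟩)
        (⟨fun p => lP (hY₀ p.1) p.2, ContinuousEval.continuous_eval.comp
          (((lP.comp hY₀).continuous.comp continuous_fst).prodMk continuous_snd)⟩)
        (fun y => by
          show Hbar (y.1, 1) = lP (hY₀ y) 0
          rw [Hbar1, lemL0]
          rfl)
    let P₀ : C({y : Y // co y ≠ 1}, HPB f ιX) :=
      HPB.mk' f ιX ⟨Subtype.val, continuous_subtype_val⟩ (lA.comp hY₀) P₀fam
        (fun y => by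
          show P₀fam (y, 0) = f y.1
          rw [show P₀fam = concatH _ _ _ from rfl, concatH_zero]
          exact Hbar0 y.1)
        (fun y => by
          show P₀fam (y, 1) = ιX (lA (hY₀ y))
          rw [show P₀fam = concatH _ _ _ from rfl, concatH_one]
          show lP (hY₀ y) 1 = _
          rw [lemL1])
    -- the right piece over `Y₁ = {co ≠ 0}` and the induction hypothesis
    let inclY₁ : C({y : Y // co y ≠ 0}, Y) := ⟨Subtype.val, continuous_subtype_val⟩
    let hY₁ : C({y : Y // co y ≠ 0}, {w : HPO sn fn // HPO.coord sn fn w ≠ 0}) :=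
      ⟨fun y => ⟨h y.1, y.2⟩,
        Continuous.subtype_mk (h.continuous.comp continuous_subtype_val) _⟩
    let h₁ : C({y : Y // co y ≠ 0}, (ganea ιX n).G) := rV.comp hY₁
    let K₁fam : C({y : Y // co y ≠ 0} × I, X) :=
      concatH (Hbar.comp ⟨fun p => (p.1.1, p.2),
          (continuous_subtype_val.comp continuous_fst).prodMk continuous_snd⟩)
        (⟨fun p => rP (hY₁ p.1) p.2, ContinuousEval.continuous_eval.comp
          (((rP.comp hY₁).continuous.comp continuous_fst).prodMk continuous_snd)⟩)
        (fun y => by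
          show Hbar (y.1, 1) = rP (hY₁ y) 0
          rw [Hbar1, lemR0]
          rfl)
    have HIH : ((ganea ιX n).g.comp h₁).Homotopic (f.comp inclY₁) := by
      refine ⟨⟨⟨fun p => K₁fam (p.2, σ p.1),
        K₁fam.continuous.comp (continuous_snd.prodMk
          (continuous_symm.comp continuous_fst))⟩, ?_, ?_⟩⟩
      · intro y
        show K₁fam (y, σ 0) = _
        rw [unitInterval.symm_zero, show K₁fam = concatH _ _ _ from rfl, concatH_one]
        show rP (hY₁ y) 1 = _
        rw [lemR1]
        rfl
      · intro y
        show K₁fam (y, σ 1) = _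
        rw [unitInterval.symm_one, show K₁fam = concatH _ _ _ from rfl, concatH_zero]
        exact Hbar0 y.1
    obtain ⟨s₁, hs₁⟩ := ih (f.comp inclY₁) h₁ HIH
    have K := hs₁.some
    -- inclusion of Ganea spaces of the restricted pullback
    let pullIncl : C(HPB (f.comp inclY₁) ιX, HPB f ιX) :=
      HPB.mk' f ιX (inclY₁.comp (HPB.fst (f.comp inclY₁) ιX))
        (HPB.snd (f.comp inclY₁) ιX) (HPB.pathEval (f.comp inclY₁) ιX)
        (fun z => HPB.pathEval_zero _ _ z) (fun z => HPB.pathEval_one _ _ z)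
    obtain ⟨T, HT⟩ := ganeaComp (HPB.fst (f.comp inclY₁) ιX) (HPB.fst f ιX)
      pullIncl inclY₁
      ((ContinuousMap.Homotopy.refl ((HPB.fst f ιX).comp pullIncl)).cast rfl
        (by ext z; rfl)) n
    -- the connecting path family over `Y₁`
    let E : C({y : Y // co y ≠ 0} × I, Y) :=
      concatH (HT.toContinuousMap.comp ⟨fun p => (p.2, s₁ p.1),
          continuous_snd.prodMk (s₁.continuous.comp continuous_fst)⟩)
        (⟨fun p => (K (p.2, p.1)).1, continuous_subtype_val.comp (K.continuous.comp
          (continuous_snd.prodMk continuous_fst))⟩)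
        (fun y => by
          show HT (1, s₁ y) = (K (0, y)).1
          rw [HT.apply_one, K.apply_zero]
          rfl)
    have E0 : ∀ y, E (y, 0) = (ganea (HPB.fst f ιX) n).g (T (s₁ y)) := by
      intro y
      rw [show E = concatH _ _ _ from rfl, concatH_zero]
      show HT (0, s₁ y) = _
      rw [HT.apply_zero]
      rfl
    have E1 : ∀ y, E (y, 1) = y.1 := by
      intro y
      rw [show E = concatH _ _ _ from rfl, concatH_one]
      show (K (1, y)).1 = y.1
      rw [K.apply_one]
      rfl
    -- the middle family over `Y₀₁`
    let toY₁ : C({y : Y // co y ≠ 0 ∧ co y ≠ 1}, {y : Y // co y ≠ 0}) :=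
      ⟨fun y => ⟨y.1, y.2.1⟩, Continuous.subtype_mk continuous_subtype_val _⟩
    let toY₀ : C({y : Y // co y ≠ 0 ∧ co y ≠ 1}, {y : Y // co y ≠ 1}) :=
      ⟨fun y => ⟨y.1, y.2.2⟩, Continuous.subtype_mk continuous_subtype_val _⟩
    let triple : C({y : Y // co y ≠ 0 ∧ co y ≠ 1},
        HPB (ganea (HPB.fst f ιX) n).g (HPB.fst f ιX)) :=
      HPB.mk' (ganea (HPB.fst f ιX) n).g (HPB.fst f ιX)
        (T.comp (s₁.comp toY₁)) (P₀.comp toY₀)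
        (E.comp ⟨fun p => (toY₁ p.1, p.2),
          ((toY₁.continuous.comp continuous_fst)).prodMk continuous_snd⟩)
        (fun y => by
          show E (toY₁ y, 0) = _
          rw [E0]
          rfl)
        (fun y => by
          show E (toY₁ y, 1) = _
          rw [E1]
          rfl)
    -- abbreviations for the legs of the `(n+1)`-st Ganea space of the pullback
    let sn' : C(HPB (ganea (HPB.fst f ιX) n).g (HPB.fst f ιX), HPB f ιX) :=
      HPB.snd (ganea (HPB.fst f ιX) n).g (HPB.fst f ιX)
    let fn' : C(HPB (ganea (HPB.fst f ιX) n).g (HPB.fst f ιX), (ganea (HPB.fst f ιX) n).G) :=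
      HPB.fst (ganea (HPB.fst f ιX) n).g (HPB.fst f ιX)
    -- the glued section
    let sfun : Y → HPO sn' fn' := fun y =>
      if hlt : (co y : ℝ) < 1 / 3 then
        HPO.inl sn' fn' (P₀ ⟨y, ne1of (by linarith)⟩)
      else if hgt : 2 / 3 < (co y : ℝ) then
        HPO.inr sn' fn' (T (s₁ ⟨y, ne0of (by linarith)⟩))
      else
        HPO.cyl sn' fn' (triple ⟨y, ⟨ne0of (by push_neg at hlt; linarith),
          ne1of (by push_neg at hgt; linarith)⟩⟩, lamI (co y))
    have sfun_eq_left : ∀ (y : Y) (hy1 : co y ≠ 1), (co y : ℝ) < 1 / 3 →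
        sfun y = HPO.inl sn' fn' (P₀ ⟨y, hy1⟩) := by
      intro y hy1 hlt
      unfold sfun
      beta_reduce
      rw [dif_pos hlt]
    have sfun_eq_right : ∀ (y : Y) (hy0 : co y ≠ 0), 2 / 3 < (co y : ℝ) →
        sfun y = HPO.inr sn' fn' (T (s₁ ⟨y, hy0⟩)) := by
      intro y hy0 hgt
      unfold sfun
      beta_reduce
      rw [dif_neg (by linarith), dif_pos hgt]
    have sfun_eq_mid : ∀ (y : Y) (hy0 : co y ≠ 0) (hy1 : co y ≠ 1),
        sfun y = HPO.cyl sn' fn' (triple ⟨y, ⟨hy0, hy1⟩⟩, lamI (co y)) := by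
      intro y hy0 hy1
      unfold sfun
      beta_reduce
      split_ifs with hlt hgt
      · rw [lamI_of_le (le_of_lt hlt), ← HPO.inl_eq_cyl]
        rfl
      · rw [lamI_of_ge (le_of_lt hgt), HPO.cyl_eq_inr]
        rfl
      · rfl
    have hcoR : Continuous fun y : Y => (co y : ℝ) :=
      continuous_subtype_val.comp co.continuous
    have scont : Continuous sfun := by
      apply continuous_of_openCover (ι := Fin 3)
        (U := ![{y : Y | (co y : ℝ) < 1 / 3},
          {y : Y | 0 < (co y : ℝ) ∧ (co y : ℝ) < 1}, {y : Y | 2 / 3 < (co y : ℝ)}])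
      · intro i
        fin_cases i
        · exact isOpen_lt hcoR continuous_const
        · exact (isOpen_lt continuous_const hcoR).inter (isOpen_lt hcoR continuous_const)
        · exact isOpen_lt continuous_const hcoR
      · intro y
        by_cases hlt : (co y : ℝ) < 1 / 3
        · exact ⟨0, hlt⟩
        · by_cases hgt : 2 / 3 < (co y : ℝ)
          · exact ⟨2, hgt⟩
          · push_neg at hlt hgt
            exact ⟨1, by constructor <;> [linarith; linarith]⟩
      · intro i
        fin_cases i
        · rw [continuousOn_iff_continuous_restrict]
          have hmap : Continuous (fun y : {y : Y | (co y : ℝ) < 1 / 3} =>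
              HPO.inl sn' fn' (P₀ ⟨y.1, ne1of (lt_trans y.2 (by norm_num))⟩)) := by
            apply (HPO.inl sn' fn').continuous.comp
            apply P₀.continuous.comp
            exact Continuous.subtype_mk continuous_subtype_val _
          apply hmap.congr
          intro y
          exact (sfun_eq_left y.1 (ne1of (lt_trans y.2 (by norm_num))) y.2).symm
        · rw [continuousOn_iff_continuous_restrict]
          have hmap : Continuous (fun y : {y : Y | 0 < (co y : ℝ) ∧ (co y : ℝ) < 1} =>
              HPO.cyl sn' fn' (triple ⟨y.1, ⟨ne0of y.2.1, ne1of y.2.2⟩⟩, lamI (co y.1))) := by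
            apply (HPO.cyl sn' fn').continuous.comp
            apply Continuous.prodMk
            · apply triple.continuous.comp
              exact Continuous.subtype_mk continuous_subtype_val _
            · exact lamI.continuous.comp (co.continuous.comp continuous_subtype_val)
          apply hmap.congr
          intro y
          exact (sfun_eq_mid y.1 (ne0of y.2.1) (ne1of y.2.2)).symm
        · rw [continuousOn_iff_continuous_restrict]
          have hmap : Continuous (fun y : {y : Y | 2 / 3 < (co y : ℝ)} =>
              HPO.inr sn' fn' (T (s₁ ⟨y.1, ne0of (by
                have h2 : 2 / 3 < (co y.1 : ℝ) := y.2
                linarith)⟩))) := by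
            apply (HPO.inr sn' fn').continuous.comp
            apply T.continuous.comp
            apply s₁.continuous.comp
            exact Continuous.subtype_mk continuous_subtype_val _
          apply hmap.congr
          intro y
          exact (sfun_eq_right y.1 (ne0of (by have h2 : 2 / 3 < (co y.1 : ℝ) := y.2; linarith)) y.2).symm
    -- the homotopy between `g ∘ s` and the identity
    let Jfun : I × Y → Y := fun p =>
      if hy0 : co p.2 = 0 then p.2
      else E (⟨p.2, hy0⟩, jmix (p.1, lamI (co p.2)))
    have Jzero : ∀ p : I × Y, co p.2 = 0 → Jfun p = p.2 := by
      intro p hp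
      unfold Jfun
      beta_reduce
      rw [dif_pos hp]
    have Jne : ∀ (p : I × Y) (hp : co p.2 ≠ 0),
        Jfun p = E (⟨p.2, hp⟩, jmix (p.1, lamI (co p.2))) := by
      intro p hp
      unfold Jfun
      beta_reduce
      rw [dif_neg hp]
    have Jsmall : ∀ p : I × Y, (co p.2 : ℝ) < 1 / 3 → Jfun p = p.2 := by
      intro p hp
      by_cases hy0 : co p.2 = 0
      · exact Jzero p hy0
      · rw [Jne p hy0, lamI_of_le (le_of_lt hp), jmix_right_zero, E1]
    have Jcont : Continuous Jfun := by
      apply continuous_of_openCover (ι := Fin 2)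
        (U := ![{p : I × Y | (co p.2 : ℝ) < 1 / 3}, {p : I × Y | co p.2 ≠ 0}])
      · intro i
        fin_cases i
        · exact isOpen_lt (hcoR.comp continuous_snd) continuous_const
        · exact isOpen_ne.preimage (co.continuous.comp continuous_snd)
      · intro p
        by_cases hy0 : co p.2 = 0
        · refine ⟨0, ?_⟩
          show (co p.2 : ℝ) < 1 / 3
          rw [hy0]
          norm_num
        · exact ⟨1, hy0⟩
      · intro i
        fin_cases i
        · rw [continuousOn_iff_continuous_restrict]
          apply Continuous.congr (continuous_snd.comp continuous_subtype_val)
          intro p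
          exact (Jsmall p.1 p.2).symm
        · rw [continuousOn_iff_continuous_restrict]
          have hmap : Continuous (fun p : {p : I × Y | co p.2 ≠ 0} =>
              E (⟨p.1.2, p.2⟩, jmix (p.1.1, lamI (co p.1.2)))) := by
            apply E.continuous.comp
            apply Continuous.prodMk
            · exact Continuous.subtype_mk
                (continuous_snd.comp continuous_subtype_val) _
            · apply jmix.continuous.comp
              apply Continuous.prodMk
              · exact continuous_fst.comp continuous_subtype_val
              · exact lamI.continuous.comp (co.continuous.comp
                  (continuous_snd.comp continuous_subtype_val))
          apply hmap.congr
          intro p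
          exact (Jne p.1 p.2).symm
    refine ⟨⟨sfun, scont⟩, ⟨⟨⟨Jfun, Jcont⟩, ?_, ?_⟩⟩⟩
    · intro y
      show Jfun (0, y) = gstep (HPB.fst f ιX) (ganea (HPB.fst f ιX) n).g (sfun y)
      by_cases hy0 : co y = 0
      · rw [Jzero (0, y) hy0,
          sfun_eq_left y (ne1of (by rw [hy0]; norm_num)) (by rw [hy0]; norm_num),
          gstep_inl]
        rfl
      · rw [Jne (0, y) hy0, jmix_zero]
        by_cases hlt : (co y : ℝ) < 1 / 3
        · rw [lamI_of_le (le_of_lt hlt), unitInterval.symm_zero, E1,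
            sfun_eq_left y (ne1of (by linarith)) hlt, gstep_inl]
          rfl
        · by_cases hgt : 2 / 3 < (co y : ℝ)
          · rw [lamI_of_ge (le_of_lt hgt), unitInterval.symm_one, E0,
              sfun_eq_right y hy0 hgt, gstep_inr]
          · push_neg at hlt hgt
            rw [sfun_eq_mid y hy0 (ne1of (by linarith)), gstep_cyl]
            rfl
    · intro y
      show Jfun (1, y) = y
      by_cases hy0 : co y = 0
      · exact Jzero (1, y) hy0
      · rw [Jne (1, y) hy0, jmix_one, E1]

end PullSection
/-! ### Arithmetic of `theNat` -/

theorem theNat_le_iff (P : ℕ → Prop) (n : ℕ) :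
    theNat P ≤ (n : ℕ∞) ↔ ∃ m, m ≤ n ∧ P m := by
  constructor
  · intro hle
    by_contra hc
    push_neg at hc
    have hlb : (n : ℕ∞) + 1 ≤ theNat P := by
      apply le_sInf
      rintro x ⟨m, hm, rfl⟩
      have hnm : n < m := by
        by_contra hnm
        push_neg at hnm
        exact hc m hnm hm
      exact_mod_cast Nat.succ_le_of_lt hnm
    have h1 := hlb.trans hle
    have h2 : (n : ℕ∞) < (n : ℕ∞) + 1 := by
      have : (n : ℕ∞) < ((n + 1 : ℕ) : ℕ∞) := by exact_mod_cast Nat.lt_succ_self n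
      simpa using this
    exact absurd (lt_of_lt_of_le h2 h1) (lt_irrefl _)
  · rintro ⟨m, hmn, hm⟩
    calc theNat P ≤ (m : ℕ∞) := sInf_le ⟨m, hm, rfl⟩
    _ ≤ (n : ℕ∞) := by exact_mod_cast hmn

end SchwarzAux
/-- Schwarz's characterization of sectional category via the Ganea fibrations. -/
theorem secat_pullback_le_iff_factors {A X Y : Type u} [TopologicalSpace A]
    [TopologicalSpace X] [TopologicalSpace Y] (ιX : C(A, X)) (f : C(Y, X)) (n : ℕ) :
    secat (HPB.fst f ιX) ≤ (n : ℕ∞) ↔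
      ∃ h : C(Y, (ganea ιX n).G), ((ganea ιX n).g.comp h).Homotopic f := by
  constructor
  · intro hle
    obtain ⟨m, hmn, s, hs⟩ : ∃ m, m ≤ n ∧ secatLe (HPB.fst f ιX) m :=
      (theNat_le_iff _ n).mp hle
    obtain ⟨T, HT⟩ := ganeaComp (HPB.fst f ιX) ιX (HPB.snd f ιX) f
      (HPB.pathHomotopy f ιX) m
    have hfac : ∃ h : C(Y, (ganea ιX m).G), ((ganea ιX m).g.comp h).Homotopic f := by
      refine ⟨T.comp s, ?_⟩
      have h1 : (ganea ιX m).g.comp (T.comp s) = ((ganea ιX m).g.comp T).comp s := by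
        ext y; rfl
      rw [h1]
      have h2 : (((ganea ιX m).g.comp T).comp s).Homotopic
          ((f.comp (ganea (HPB.fst f ιX) m).g).comp s) :=
        ContinuousMap.Homotopic.comp ⟨HT⟩ (ContinuousMap.Homotopic.refl s)
      refine h2.trans ?_
      have h3 : (f.comp (ganea (HPB.fst f ιX) m).g).comp s =
          f.comp ((ganea (HPB.fst f ιX) m).g.comp s) := by ext y; rfl
      rw [h3]
      have h4 : (f.comp ((ganea (HPB.fst f ιX) m).g.comp s)).Homotopic
          (f.comp (ContinuousMap.id Y)) := (ContinuousMap.Homotopic.refl f).comp hs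
      refine h4.trans ?_
      rw [ContinuousMap.comp_id]
    have hbump : ∀ k, m ≤ k →
        ∃ hmap : C(Y, (ganea ιX k).G), ((ganea ιX k).g.comp hmap).Homotopic f := by
      intro k hk
      induction k, hk using Nat.le_induction with
      | base => exact hfac
      | succ k hk ihk =>
        obtain ⟨hm, hhm⟩ := ihk
        refine ⟨(HPO.inr (HPB.snd (ganea ιX k).g ιX) (HPB.fst (ganea ιX k).g ιX)).comp hm, ?_⟩
        have heq : (ganea ιX (k + 1)).g.comp
            ((HPO.inr (HPB.snd (ganea ιX k).g ιX) (HPB.fst (ganea ιX k).g ιX)).comp hm) =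
            (ganea ιX k).g.comp hm := by
          ext y; rfl
        rw [heq]
        exact hhm
    exact hbump n hmn
  · rintro ⟨hmap, hh⟩
    obtain ⟨s, hs⟩ := pullSection ιX n f hmap hh
    exact (theNat_le_iff _ n).mpr ⟨n, le_refl n, ⟨s, hs⟩⟩
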